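/- Let G be a group, H a normal subgroup of G, and X ⊆ G a right transversal of H in G (i.e., for every g ∈ G there exists x ∈ X with g·x⁻¹ ∈ H). Then for every subset A ⊆ H, the normal closure of A in G equals the normal closure, computed in H, of the set { x a x⁻¹ : x ∈ X, a ∈ A }; that is, ⟪A⟫_G = ⟪{ x a x⁻¹ : x ∈ X, a ∈ A }⟫_H as subgroups of G. -/

import Mathlib

/-- Let `G` be a group, `H` a normal subgroup of `G`, and `X ⊆ G` a right transversal of `H`
in `G` (i.e., every `g ∈ G` satisfies `g * x⁻¹ ∈ H` for some `x ∈ X`). Then for every subset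
`A ⊆ H`, the normal closure of `A` in `G` equals the normal closure, computed in `H`, of the
set `{x a x⁻¹ : x ∈ X, a ∈ A}`, regarded as a subgroup of `G`. -/
theorem stmt2 {G : Type*} [Group G] (H : Subgroup G) [H.Normal] (X : Set G)
    (hX : ∀ g : G, ∃ x ∈ X, g * x⁻¹ ∈ H) (A : Set G) (hA : A ⊆ (H : Set G)) :
    Subgroup.normalClosure A =
      (Subgroup.normalClosure
        {h : H | ∃ x ∈ X, ∃ a ∈ A, (h : G) = x * a * x⁻¹}).map H.subtype := by
  set S : Set H := {h : H | ∃ x ∈ X, ∃ a ∈ A, (h : G) = x * a * x⁻¹} with hS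
  set N := (Subgroup.normalClosure S).map H.subtype with hN
  have hSin : ∀ x ∈ X, ∀ a ∈ A, x * a * x⁻¹ ∈ N := by
    intro x hx a ha
    have hmem : x * a * x⁻¹ ∈ H := Subgroup.Normal.conj_mem ‹H.Normal› a (hA ha) x
    exact ⟨⟨_, hmem⟩, Subgroup.subset_normalClosure ⟨x, hx, a, ha, rfl⟩, rfl⟩
  have hconj : ∀ (g : G), ∀ n ∈ N, g * n * g⁻¹ ∈ N := by
    intro g n hn
    obtain ⟨m, hm, rfl⟩ := hn
    refine ⟨MulAut.conjNormal g m, ?_, MulAut.conjNormal_apply g m⟩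
    have hmap : (Subgroup.normalClosure S).map (MulAut.conjNormal g).toMonoidHom =
        Subgroup.normalClosure ((MulAut.conjNormal (H := H) g) '' S) :=
      Subgroup.map_normalClosure S _ (MulAut.conjNormal g).surjective
    have hle : Subgroup.normalClosure ((MulAut.conjNormal (H := H) g) '' S) ≤
        Subgroup.normalClosure S := by
      apply Subgroup.normalClosure_le_normal
      rintro _ ⟨s, ⟨x, hx, a, ha, hsa⟩, rfl⟩
      obtain ⟨x', hx', hH'⟩ := hX (g * x)
      have hx'a : x' * a * ↑x'⁻¹ ∈ H := Subgroup.Normal.conj_mem ‹H.Normal› a (hA ha) x'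
      have hs' : (⟨x' * a * x'⁻¹, hx'a⟩ : H) ∈ Subgroup.normalClosure S :=
        Subgroup.subset_normalClosure ⟨x', hx', a, ha, rfl⟩
      have := (Subgroup.normalClosure_normal (s := S)).conj_mem _ hs' ⟨g * x * x'⁻¹, hH'⟩
      rw [SetLike.mem_coe]
      convert this using 1
      ext
      push_cast [MulAut.conjNormal_apply, hsa]
      group
    exact hle (hmap ▸ Subgroup.mem_map_of_mem _ hm)
  haveI hNnorm : N.Normal := ⟨fun n hn g => hconj g n hn⟩
  apply le_antisymm
  · apply Subgroup.normalClosure_le_normal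
    intro a ha
    obtain ⟨x, hx, -⟩ := hX 1
    have h1 : x * a * x⁻¹ ∈ N := hSin x hx a ha
    have h2 := hconj x⁻¹ _ h1
    simpa [mul_assoc] using h2
  · rw [Subgroup.map_le_iff_le_comap]
    haveI : ((Subgroup.normalClosure A).comap H.subtype).Normal :=
      Subgroup.Normal.comap inferInstance H.subtype
    apply Subgroup.normalClosure_le_normal
    rintro s ⟨x, hx, a, ha, hsa⟩
    simp only [SetLike.mem_coe, Subgroup.mem_comap]
    show (s : G) ∈ _
    rw [hsa]
    exact (Subgroup.normalClosure_normal).conj_mem a (Subgroup.subset_normalClosure ha) x
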